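/- Let S be a sampling over [n] with probability matrix P (P_ij = Prob({i,j} ⊆ S)) and probability vector p (p_i = Prob(i ∈ S)). Then the inequality P − p pᵀ ⪯ Diag(p₁v₁, p₂v₂, …, p_n v_n) holds with the choice v_i = n(1 − p_i) for all i; i.e., the matrix Diag(p₁v₁, …, p_n v_n) − (P − p pᵀ) is positive semidefinite. -/

import Mathlib

/-- For a sampling `S` over `[n]` (modeled by a probability mass
function `w` on subsets of `Fin n`) with probability matrix `P` and probability
vector `p`, the inequality `P − p pᵀ ⪯ Diag(p₁v₁, …, p_n v_n)` holds with
`v_i = n(1 − p_i)`. -/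
theorem eso_with_vi_n_one_sub_pi {n : ℕ} (hn : 1 ≤ n)
    (w : Finset (Fin n) → ℝ) (hw : ∀ s, 0 ≤ w s)
    (hsum : ∑ s : Finset (Fin n), w s = 1)
    (P : Matrix (Fin n) (Fin n) ℝ)
    (hP : ∀ i j, P i j = ∑ s : Finset (Fin n), if i ∈ s ∧ j ∈ s then w s else 0)
    (p : Fin n → ℝ)
    (hp : ∀ i, p i = ∑ s : Finset (Fin n), if i ∈ s then w s else 0)
    (v : Fin n → ℝ) (hv : ∀ i, v i = n * (1 - p i)) :
    (Matrix.diagonal (fun i => p i * v i) - (P - Matrix.vecMulVec p p)).PosSemidef := by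
  classical
  set χ : Finset (Fin n) → Fin n → ℝ := fun s i => if i ∈ s then 1 else 0 with hχ
  have hp' : ∀ i, p i = ∑ s : Finset (Fin n), w s * χ s i := by
    intro i; rw [hp i]
    exact Finset.sum_congr rfl fun s _ => by simp [hχ, mul_ite]
  have hP' : ∀ i j, P i j = ∑ s : Finset (Fin n), w s * χ s i * χ s j := by
    intro i j; rw [hP i j]
    refine Finset.sum_congr rfl fun s _ => ?_
    simp only [hχ, mul_ite, mul_one, mul_zero]
    by_cases h1 : i ∈ s <;> by_cases h2 : j ∈ s <;> simp [h1, h2]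
  -- second moment of the indicator
  have hmom : ∀ i, ∑ s : Finset (Fin n), w s * (χ s i - p i) ^ 2 = p i - p i ^ 2 := by
    intro i
    have hsq : ∀ s, χ s i ^ 2 = χ s i := by
      intro s; simp only [hχ]; split <;> norm_num
    have : ∀ s, w s * (χ s i - p i) ^ 2
        = w s * χ s i - 2 * p i * (w s * χ s i) + p i ^ 2 * w s := by
      intro s
      have : (χ s i - p i) ^ 2 = χ s i - 2 * p i * χ s i + p i ^ 2 := by
        have := hsq s; nlinarith [hsq s]
      rw [this]; ring
    rw [Finset.sum_congr rfl fun s _ => this s]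
    rw [Finset.sum_add_distrib, Finset.sum_sub_distrib, ← Finset.mul_sum, ← Finset.mul_sum,
      ← hp' i, hsum]
    ring
  have hPsym : ∀ i j, P j i = P i j := by
    intro i j
    rw [hP, hP]
    exact Finset.sum_congr rfl fun s _ => if_congr and_comm rfl rfl
  rw [Matrix.posSemidef_iff_dotProduct_mulVec]
  constructor
  · -- symmetry
    ext i j
    simp only [Matrix.conjTranspose_apply, Matrix.sub_apply, Matrix.diagonal_apply,
      Matrix.vecMulVec_apply, star_sub, star_trivial]
    rw [hPsym i j]
    by_cases h : i = j
    · subst h; ring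
    · simp [h, Ne.symm h]; ring
  · intro x
    set T : Finset (Fin n) → ℝ := fun s => ∑ i, x i * χ s i with hT
    set μ : ℝ := ∑ i, x i * p i with hμ
    have hwT : ∑ s : Finset (Fin n), w s * T s = μ := by
      rw [hμ]
      simp only [hT, Finset.mul_sum]
      rw [Finset.sum_comm]
      refine Finset.sum_congr rfl fun i _ => ?_
      rw [hp' i, Finset.mul_sum]
      exact Finset.sum_congr rfl fun s _ => by ring
    have hxPx : ∑ i, x i * ∑ j, P i j * x j
        = ∑ s : Finset (Fin n), w s * T s ^ 2 := by
      have step : ∀ i, x i * ∑ j, P i j * x j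
          = ∑ s : Finset (Fin n), w s * (x i * χ s i) * T s := by
        intro i
        rw [Finset.mul_sum]
        rw [show (∑ j, x i * (P i j * x j))
            = ∑ j, ∑ s : Finset (Fin n), w s * (x i * χ s i) * (x j * χ s j) from
          Finset.sum_congr rfl fun j _ => by
            rw [hP' i j, Finset.sum_mul, Finset.mul_sum]
            exact Finset.sum_congr rfl fun s _ => by ring]
        rw [Finset.sum_comm]
        exact Finset.sum_congr rfl fun s _ => by rw [hT, Finset.mul_sum]
      calc ∑ i, x i * ∑ j, P i j * x j
          = ∑ i, ∑ s : Finset (Fin n), w s * (x i * χ s i) * T s :=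
            Finset.sum_congr rfl fun i _ => step i
        _ = ∑ s : Finset (Fin n), ∑ i, w s * (x i * χ s i) * T s := Finset.sum_comm
        _ = ∑ s : Finset (Fin n), w s * T s ^ 2 := by
            refine Finset.sum_congr rfl fun s _ => ?_
            rw [show (∑ i, w s * (x i * χ s i) * T s) = (∑ i, x i * χ s i) * (w s * T s) from by
              rw [Finset.sum_mul]; exact Finset.sum_congr rfl fun i _ => by ring]
            show T s * (w s * T s) = w s * T s ^ 2
            ring
    have key : dotProduct (star x) (((Matrix.diagonal (fun i => p i * v i))
          - (P - Matrix.vecMulVec p p)).mulVec x)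
        = (∑ i, p i * v i * x i ^ 2) - ∑ s : Finset (Fin n), w s * (T s - μ) ^ 2 := by
      have expand : ∑ s : Finset (Fin n), w s * (T s - μ) ^ 2
          = (∑ s : Finset (Fin n), w s * T s ^ 2)
            - 2 * μ * (∑ s : Finset (Fin n), w s * T s)
            + μ ^ 2 * ∑ s : Finset (Fin n), w s := by
        have hterm : ∀ s, w s * (T s - μ) ^ 2
            = w s * T s ^ 2 - 2 * μ * (w s * T s) + μ ^ 2 * w s := fun s => by ring
        rw [Finset.sum_congr rfl fun s _ => hterm s, Finset.sum_add_distrib,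
          Finset.sum_sub_distrib, ← Finset.mul_sum, ← Finset.mul_sum]
      have lhs_eq : ∀ i, x i * (∑ j, ((if i = j then p i * v i else 0)
            - (P i j - p i * p j)) * x j)
          = p i * v i * x i ^ 2 - x i * (∑ j, P i j * x j) + (x i * p i) * μ := by
        intro i
        have split : (∑ j, ((if i = j then p i * v i else 0) - (P i j - p i * p j)) * x j)
            = (∑ j, (if i = j then p i * v i else 0) * x j)
              - (∑ j, P i j * x j) + ∑ j, p i * p j * x j := by
          rw [← Finset.sum_sub_distrib, ← Finset.sum_add_distrib]
          exact Finset.sum_congr rfl fun j _ => by ring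
        have h1 : (∑ j, (if i = j then p i * v i else 0) * x j) = p i * v i * x i := by
          simp [ite_mul]
        have h2 : (∑ j, p i * p j * x j) = p i * μ := by
          rw [hμ, Finset.mul_sum]; exact Finset.sum_congr rfl fun j _ => by ring
        rw [split, h1, h2]; ring
      simp only [dotProduct, Matrix.mulVec, Matrix.sub_apply, Matrix.diagonal_apply,
        Matrix.vecMulVec_apply, Pi.star_apply, star_trivial]
      rw [expand, hwT, hsum]
      calc ∑ i, x i * (∑ j, ((if i = j then p i * v i else 0) - (P i j - p i * p j)) * x j)
          = ∑ i, (p i * v i * x i ^ 2 - x i * (∑ j, P i j * x j) + (x i * p i) * μ) :=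
            Finset.sum_congr rfl fun i _ => lhs_eq i
        _ = (∑ i, p i * v i * x i ^ 2) - (∑ i, x i * ∑ j, P i j * x j)
            + (∑ i, x i * p i) * μ := by
            rw [Finset.sum_add_distrib, Finset.sum_sub_distrib, Finset.sum_mul]
        _ = (∑ i, p i * v i * x i ^ 2)
            - ((∑ s : Finset (Fin n), w s * T s ^ 2) - 2 * μ * μ + μ ^ 2 * 1) := by
            rw [hxPx, ← hμ]; ring
    rw [key]
    have bound : ∑ s : Finset (Fin n), w s * (T s - μ) ^ 2 ≤ ∑ i, p i * v i * x i ^ 2 := by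
      have ptw : ∀ s : Finset (Fin n),
          w s * (T s - μ) ^ 2 ≤ w s * ((n : ℝ) * ∑ i, (x i * (χ s i - p i)) ^ 2) := by
        intro s
        refine mul_le_mul_of_nonneg_left ?_ (hw s)
        have hTμ : T s - μ = ∑ i, x i * (χ s i - p i) := by
          show (∑ i, x i * χ s i) - (∑ i, x i * p i) = _
          rw [← Finset.sum_sub_distrib]
          exact Finset.sum_congr rfl fun i _ => by ring
        rw [hTμ]
        have := sq_sum_le_card_mul_sum_sq (s := (Finset.univ : Finset (Fin n)))
          (f := fun i => x i * (χ s i - p i))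
        simpa using this
      calc ∑ s : Finset (Fin n), w s * (T s - μ) ^ 2
          ≤ ∑ s : Finset (Fin n), w s * ((n : ℝ) * ∑ i, (x i * (χ s i - p i)) ^ 2) :=
            Finset.sum_le_sum fun s _ => ptw s
        _ = ∑ i, p i * v i * x i ^ 2 := by
            rw [show (∑ s : Finset (Fin n), w s * ((n : ℝ) * ∑ i, (x i * (χ s i - p i)) ^ 2))
                = ∑ s : Finset (Fin n), ∑ i, (n : ℝ) * (x i ^ 2 * (w s * (χ s i - p i) ^ 2)) from
              Finset.sum_congr rfl fun s _ => by
                rw [Finset.mul_sum, Finset.mul_sum]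
                exact Finset.sum_congr rfl fun i _ => by ring]
            rw [Finset.sum_comm]
            refine Finset.sum_congr rfl fun i _ => ?_
            rw [show (∑ s : Finset (Fin n), (n : ℝ) * (x i ^ 2 * (w s * (χ s i - p i) ^ 2)))
                = (n : ℝ) * x i ^ 2 * ∑ s : Finset (Fin n), w s * (χ s i - p i) ^ 2 from by
              rw [Finset.mul_sum]; exact Finset.sum_congr rfl fun s _ => by ring]
            rw [hmom i, hv i]; ring
    have hA : 0 ≤ (∑ i, p i * v i * x i ^ 2) - ∑ s : Finset (Fin n), w s * (T s - μ) ^ 2 :=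
      sub_nonneg.mpr bound
    exact hA
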